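/- Let $(u_n)$ be a sequence of reals, $F_c$ a continuous CDF, and suppose $n \bar F_c(u_n) \to \tau$ and $n \bar F_c(u_n - 1) \to \tau'$ with $0 < \tau < \tau' < \infty$, where $\bar F_c = 1 - F_c$. Let $(X_i)_{i\ge 1}$ be i.i.d. integer-valued random variables whose CDF $F$ satisfies $F_c(x - 1) \le F(x) \le F_c(x)$ for all $x$, and let $\hat M_n = \max(X_1, \ldots, X_n)$. Then $\limsup_{n\to\infty} \Pr(\hat M_n \le u_n) \le e^{-\tau}$ and $\liminf_{n\to\infty} \Pr(\hat M_n \le u_n) \ge e^{-\tau'}$. -/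

import Mathlib

open MeasureTheory ProbabilityTheory Filter

lemma aux_tendsto_one (F : ℕ → ℝ) (τ : ℝ)
    (h : Tendsto (fun n : ℕ => (n : ℝ) * (1 - F n)) atTop (nhds τ)) :
    Tendsto (fun n : ℕ => 1 - F n) atTop (nhds 0) := by
  have h2 : Tendsto (fun n : ℕ => ((n : ℝ) * (1 - F n)) * (1 / n)) atTop (nhds (τ * 0)) :=
    h.mul tendsto_one_div_atTop_nhds_zero_nat
  rw [mul_zero] at h2
  refine h2.congr' ?_
  filter_upwards [eventually_ge_atTop 1] with n hn
  have : (n : ℝ) ≠ 0 := by positivity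
  field_simp

lemma aux_pow (F : ℕ → ℝ) (τ : ℝ) (hτ : 0 < τ)
    (h : Tendsto (fun n : ℕ => (n : ℝ) * (1 - F n)) atTop (nhds τ)) :
    Tendsto (fun n : ℕ => F n ^ n) atTop (nhds (Real.exp (-τ))) := by
  set s : ℕ → ℝ := fun n => 1 - F n with hs
  have hs0 : Tendsto s atTop (nhds 0) := aux_tendsto_one F τ h
  -- eventually s n > 0 and s n < 1/2
  have hpos : ∀ᶠ n : ℕ in atTop, 0 < s n := by
    have htpos : ∀ᶠ n : ℕ in atTop, 0 < (n : ℝ) * (1 - F n) :=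
      h.eventually (eventually_gt_nhds hτ)
    filter_upwards [htpos, eventually_ge_atTop 1] with n h1 h2
    have hn : (0 : ℝ) < n := by exact_mod_cast h2
    rcases mul_pos_iff.mp h1 with ⟨_, h'⟩ | ⟨h', _⟩
    · exact h'
    · linarith
  have hlt : ∀ᶠ n : ℕ in atTop, s n < 1/2 :=
    hs0.eventually (eventually_lt_nhds (by norm_num))
  -- slope: log(1 - x)/x → -1 as x → 0, x ≠ 0
  have hderiv : HasDerivAt (fun x : ℝ => Real.log (1 - x)) (-1) 0 := by
    have h1 : HasDerivAt (fun x : ℝ => 1 - x) (-1) 0 := by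
      simpa using (hasDerivAt_id (0:ℝ)).const_sub 1
    have h2 := (Real.hasDerivAt_log (by norm_num : (1:ℝ) - 0 ≠ 0)).comp 0 h1
    simp at h2
    exact h2
  have hslope := hasDerivAt_iff_tendsto_slope.mp hderiv
  have hsne : Tendsto s atTop (nhdsWithin 0 {(0:ℝ)}ᶜ) := by
    refine tendsto_nhdsWithin_iff.mpr ⟨hs0, ?_⟩
    filter_upwards [hpos] with n hn using ne_of_gt hn
  have hratio : Tendsto (fun n : ℕ => Real.log (1 - s n) / s n) atTop (nhds (-1)) := by
    have := hslope.comp hsne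
    refine this.congr ?_
    intro n
    simp [slope_def_field, div_eq_mul_inv]
  -- n * log (F n) → -τ
  have hmain : Tendsto (fun n : ℕ => (n : ℝ) * Real.log (F n)) atTop (nhds (-τ)) := by
    have hprod : Tendsto (fun n : ℕ => ((n : ℝ) * (1 - F n)) *
        (Real.log (1 - s n) / s n)) atTop (nhds (τ * (-1))) := h.mul hratio
    rw [mul_neg_one] at hprod
    refine hprod.congr' ?_
    filter_upwards [hpos] with n hn
    have hne : s n ≠ 0 := ne_of_gt hn
    have : F n = 1 - s n := by simp [hs]
    rw [this]
    field_simp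
    ring
  have hexp : Tendsto (fun n : ℕ => Real.exp ((n : ℝ) * Real.log (F n))) atTop
      (nhds (Real.exp (-τ))) := (Real.continuous_exp.tendsto _).comp hmain
  refine hexp.congr' ?_
  filter_upwards [hpos, hlt] with n h1 h2
  have hF : 0 < F n := by simp only [hs] at h2 ⊢; linarith
  rw [Real.exp_nat_mul, Real.exp_log hF]

/-- Anderson's bounds: for i.i.d. integer-valued `X_i` whose CDF is sandwiched between
shifts of a continuous CDF `F_c`, with `n F̄_c(u_n) → τ` and `n F̄_c(u_n - 1) → τ'`,
`limsup Pr(M̂_n ≤ u_n) ≤ e^{-τ}` and `liminf Pr(M̂_n ≤ u_n) ≥ e^{-τ'}`. -/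
theorem claim_anderson_bounds {Ω : Type*} [MeasurableSpace Ω] (μ : Measure Ω)
    [IsProbabilityMeasure μ] (X : ℕ → Ω → ℤ) (hmeas : ∀ i, Measurable (X i))
    (hindep : iIndepFun X μ)
    (hident : ∀ i, μ.map (X i) = μ.map (X 0))
    (Fc : ℝ → ℝ) (hFc : Continuous Fc)
    (hsand : ∀ x : ℝ, Fc (x - 1) ≤ (μ {ω | (X 0 ω : ℝ) ≤ x}).toReal ∧
      (μ {ω | (X 0 ω : ℝ) ≤ x}).toReal ≤ Fc x)
    (u : ℕ → ℝ) (τ τ' : ℝ) (hτ : 0 < τ) (hττ' : τ < τ')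
    (hlim : Tendsto (fun n : ℕ => (n : ℝ) * (1 - Fc (u n))) atTop (nhds τ))
    (hlim' : Tendsto (fun n : ℕ => (n : ℝ) * (1 - Fc (u n - 1))) atTop (nhds τ')) :
    Filter.limsup
        (fun n : ℕ => (μ {ω | ∀ i ∈ Finset.range n, (X i ω : ℝ) ≤ u n}).toReal) atTop ≤
      Real.exp (-τ) ∧
    Real.exp (-τ') ≤ Filter.liminf
        (fun n : ℕ => (μ {ω | ∀ i ∈ Finset.range n, (X i ω : ℝ) ≤ u n}).toReal) atTop := by
  -- step 1: identify the probability as p n ^ n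
  set p : ℕ → ℝ := fun n => (μ {ω | (X 0 ω : ℝ) ≤ u n}).toReal with hp
  have hkey : ∀ n : ℕ,
      (μ {ω | ∀ i ∈ Finset.range n, (X i ω : ℝ) ≤ u n}).toReal = p n ^ n := by
    intro n
    set S : Set ℤ := {z : ℤ | (z : ℝ) ≤ u n} with hS
    have hset : {ω | ∀ i ∈ Finset.range n, (X i ω : ℝ) ≤ u n}
        = ⋂ i ∈ Finset.range n, X i ⁻¹' S := by
      ext ω; simp [hS]
    have hprod := hindep.meas_biInter (S := Finset.range n)
      (s := fun i => X i ⁻¹' S) (fun i _ => ⟨S, trivial, rfl⟩)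
    have hone : ∀ i, μ (X i ⁻¹' S) = μ (X 0 ⁻¹' S) := by
      intro i
      have h1 : μ.map (X i) S = μ.map (X 0) S := by rw [hident i]
      rwa [Measure.map_apply (hmeas i) trivial, Measure.map_apply (hmeas 0) trivial] at h1
    have hpre : (X 0 ⁻¹' S) = {ω | (X 0 ω : ℝ) ≤ u n} := rfl
    rw [hset, hprod]
    simp only [hone, hpre]
    rw [Finset.prod_const, Finset.card_range, ENNReal.toReal_pow]
  simp only [hkey]
  -- basic bounds on p
  have hp0 : ∀ n, 0 ≤ p n := fun n => ENNReal.toReal_nonneg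
  have hp1 : ∀ n, p n ≤ 1 := fun n => by
    have := prob_le_one (μ := μ) (s := {ω | (X 0 ω : ℝ) ≤ u n})
    simpa [hp] using ENNReal.toReal_le_of_le_ofReal zero_le_one (by simpa using this)
  have hconv : Tendsto (fun n : ℕ => Fc (u n) ^ n) atTop (nhds (Real.exp (-τ))) :=
    aux_pow _ τ hτ hlim
  have hconv' : Tendsto (fun n : ℕ => Fc (u n - 1) ^ n) atTop (nhds (Real.exp (-τ'))) :=
    aux_pow _ τ' (hτ.trans hττ') hlim'
  constructor
  · -- limsup bound
    have hle : ∀ n, p n ^ n ≤ Fc (u n) ^ n := fun n =>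
      pow_le_pow_left₀ (hp0 n) (hsand (u n)).2 n
    calc Filter.limsup (fun n : ℕ => p n ^ n) atTop
        ≤ Filter.limsup (fun n : ℕ => Fc (u n) ^ n) atTop := by
          refine limsup_le_limsup (Eventually.of_forall hle) ?_ ?_
          · exact IsBoundedUnder.isCoboundedUnder_le
              (isBoundedUnder_of ⟨0, fun n => pow_nonneg (hp0 n) n⟩)
          · exact hconv.isBoundedUnder_le
      _ = Real.exp (-τ) := hconv.limsup_eq
  · -- liminf bound
    have hposF : ∀ᶠ n : ℕ in atTop, 0 ≤ Fc (u n - 1) := by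
      have := aux_tendsto_one (fun n => Fc (u n - 1)) τ' hlim'
      have h2 : ∀ᶠ n : ℕ in atTop, 1 - Fc (u n - 1) < 1 :=
        this.eventually (eventually_lt_nhds one_pos)
      filter_upwards [h2] with n hn; linarith
    have hle : ∀ᶠ n : ℕ in atTop, Fc (u n - 1) ^ n ≤ p n ^ n := by
      filter_upwards [hposF] with n hn
      exact pow_le_pow_left₀ hn (hsand (u n)).1 n
    calc Real.exp (-τ') = Filter.liminf (fun n : ℕ => Fc (u n - 1) ^ n) atTop :=
          hconv'.liminf_eq.symm
      _ ≤ Filter.liminf (fun n : ℕ => p n ^ n) atTop := by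
          refine liminf_le_liminf hle ?_ ?_
          · exact hconv'.isBoundedUnder_ge
          · exact IsBoundedUnder.isCoboundedUnder_ge
              (isBoundedUnder_of ⟨1, fun n => pow_le_one₀ (hp0 n) (hp1 n)⟩)
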